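/- For every x ∈ ℝ^d, every k ∈ ℤ^d, and every ω ∈ Ω there is a unique ω' ∈ Ω such that 𝔡(x, ω) = 𝔡(x + k, ω'). Moreover, if x, x' ∈ ℝ^d and ω, ω' ∈ Ω satisfy 𝔡(x, ω) = 𝔡(x', ω'), then x' − x ∈ ℤ^d. -/

import Mathlib

open Matrix MeasureTheory Filter Topology

noncomputable section

/-- The integer lattice ℤ^d inside ℝ^d. -/
def intLattice (d : ℕ) : AddSubgroup (Fin d → ℝ) where
  carrier := {x | ∀ i, ∃ k : ℤ, x i = (k : ℝ)}
  zero_mem' := fun i => ⟨0, by simp⟩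
  add_mem' := by
    intro x y hx hy i
    obtain ⟨a, ha⟩ := hx i
    obtain ⟨b, hb⟩ := hy i
    exact ⟨a + b, by simp [ha, hb]⟩
  neg_mem' := by
    intro x hx i
    obtain ⟨a, ha⟩ := hx i
    exact ⟨-a, by simp [ha]⟩

/-- The torus ℝ^d / ℤ^d. -/
abbrev Torus (d : ℕ) := (Fin d → ℝ) ⧸ intLattice d

/-- The quotient homomorphism π : ℝ^d → 𝕋^d. -/
def torusMk (d : ℕ) : (Fin d → ℝ) →+ Torus d := QuotientAddGroup.mk' (intLattice d)

/-- A square integer matrix is expansive if all of its complex eigenvalues `μ`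
satisfy `|μ| > 1`. -/
def Expansive {d : ℕ} (A : Matrix (Fin d) (Fin d) ℤ) : Prop :=
  ∀ μ : ℂ, (Matrix.charpoly (A.map (Int.cast : ℤ → ℂ))).IsRoot μ → 1 < ‖μ‖

/-- The real matrix associated to an integer matrix. -/
def toR {d : ℕ} (A : Matrix (Fin d) (Fin d) ℤ) : Matrix (Fin d) (Fin d) ℝ :=
  A.map (Int.cast : ℤ → ℝ)

lemma latticeMap_aux {d : ℕ} (M : Matrix (Fin d) (Fin d) ℤ) :
    intLattice d ≤ (intLattice d).comap (toR M).mulVecLin.toAddMonoidHom := by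
  intro x hx
  choose k hk using hx
  intro i
  refine ⟨∑ j, M i j * k j, ?_⟩
  have : (toR M).mulVecLin.toAddMonoidHom x i = ∑ j, (M i j : ℝ) * (k j : ℝ) := by
    simp [toR, Matrix.mulVec, dotProduct, hk, Matrix.map_apply]
  rw [this]
  push_cast
  ring

/-- The endomorphism of the torus induced by an integer matrix. -/
def torusHom {d : ℕ} (M : Matrix (Fin d) (Fin d) ℤ) : Torus d →+ Torus d :=
  QuotientAddGroup.map _ _ (toR M).mulVecLin.toAddMonoidHom (latticeMap_aux M)

/-- The solenoid `S_A`, as an additive subgroup of `(𝕋^d)^ℕ`. -/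
def solenoid {d : ℕ} (A : Matrix (Fin d) (Fin d) ℤ) : AddSubgroup (ℕ → Torus d) where
  carrier := {z | ∀ n, torusHom Aᵀ (z (n + 1)) = z n}
  zero_mem' := by intro n; simp
  add_mem' := by
    intro a b ha hb n
    simp only [Pi.add_apply, map_add, ha n, hb n]
  neg_mem' := by
    intro a ha n
    simp only [Pi.neg_apply, map_neg, ha n]

/-- The shift automorphism σ_A of the solenoid (written on the ambient space). -/
def sigmaA {d : ℕ} (A : Matrix (Fin d) (Fin d) ℤ) (z : ℕ → Torus d) : ℕ → Torus d
  | 0 => torusHom Aᵀ (z 0)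
  | n + 1 => z n

/-- The embedding î : ℝ^d → S_A, î(x) = (π((Aᵀ)^{-n} x))ₙ. -/
def ihat {d : ℕ} (A : Matrix (Fin d) (Fin d) ℤ) (x : Fin d → ℝ) : ℕ → Torus d :=
  fun n => torusMk d ((((toR A)ᵀ)⁻¹ ^ n).mulVec x)

end

/-- D is a complete set of representatives of ℤ^d / Aᵀℤ^d. -/
def CompleteDigits {d : ℕ} (A : Matrix (Fin d) (Fin d) ℤ) (D : Set (Fin d → ℤ)) : Prop :=
  ∀ x : Fin d → ℤ, ∃! v : Fin d → ℤ, v ∈ D ∧ ∃ y : Fin d → ℤ, x - v = Aᵀ.mulVec y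

/-- The affine map τ_v(x) = (Aᵀ)⁻¹(x + v) for a digit v ∈ ℤ^d. -/
noncomputable def tauD {d : ℕ} (A : Matrix (Fin d) (Fin d) ℤ) (v : Fin d → ℤ)
    (x : Fin d → ℝ) : Fin d → ℝ :=
  (((toR A)ᵀ)⁻¹).mulVec (x + fun i => (v i : ℝ))

/-- The attractor X(Aᵀ, D) = { ∑_{j≥1} (Aᵀ)^{−j} d_j : d_j ∈ D }. -/
def attractor (d : ℕ) (A : Matrix (Fin d) (Fin d) ℤ) (D : Set (Fin d → ℤ)) :
    Set (Fin d → ℝ) :=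
  {x | ∃ dig : ℕ → Fin d → ℤ, (∀ j, dig j ∈ D) ∧
    HasSum (fun j : ℕ => ((((toR A)ᵀ)⁻¹) ^ (j + 1)).mulVec fun i => (dig j i : ℝ)) x}

/-- Iterated maps: tauWord ω n = τ_{ω_{n−1}} ∘ ⋯ ∘ τ_{ω_0} (identity for n = 0). -/
noncomputable def tauWord {d : ℕ} (A : Matrix (Fin d) (Fin d) ℤ)
    (ω : ℕ → Fin d → ℤ) : ℕ → (Fin d → ℝ) → Fin d → ℝ
  | 0 => fun x => x
  | n + 1 => fun x => tauD A (ω n) (tauWord A ω n x)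

/-- The decoding map 𝔡 : ℝ^d × Ω → S_A, 𝔡(x,ω)_n = π(τ_{ω_{n−1}}⋯τ_{ω_0} x). -/
noncomputable def codeMap {d : ℕ} (A : Matrix (Fin d) (Fin d) ℤ)
    (x : Fin d → ℝ) (ω : ℕ → Fin d → ℤ) : ℕ → Torus d :=
  fun n => torusMk d (tauWord A ω n x)

/-! ### Auxiliary material for statement9 -/

/-- Casting an integer vector to a real vector. -/
def cV {d : ℕ} (v : Fin d → ℤ) : Fin d → ℝ := fun i => (v i : ℝ)

lemma cV_mem {d : ℕ} (v : Fin d → ℤ) : cV v ∈ intLattice d := fun i => ⟨v i, rfl⟩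

lemma cV_inj {d : ℕ} : Function.Injective (cV (d := d)) := by
  intro a b h
  funext i
  exact Int.cast_injective (congrFun h i)

lemma cV_add {d : ℕ} (a b : Fin d → ℤ) : cV (a + b) = cV a + cV b := by
  funext i; simp [cV]

lemma cV_sub {d : ℕ} (a b : Fin d → ℤ) : cV (a - b) = cV a - cV b := by
  funext i; simp [cV]

lemma mulVec_cV {d : ℕ} (M : Matrix (Fin d) (Fin d) ℤ) (v : Fin d → ℤ) :
    (toR M).mulVec (cV v) = cV (M.mulVec v) := by
  funext i
  simp only [toR, Matrix.mulVec, dotProduct, cV, Matrix.map_apply]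
  push_cast
  rfl

lemma toR_transpose {d : ℕ} (A : Matrix (Fin d) (Fin d) ℤ) : toR Aᵀ = (toR A)ᵀ :=
  Matrix.transpose_map

lemma torusMk_eq_iff {d : ℕ} (a b : Fin d → ℝ) :
    torusMk d a = torusMk d b ↔ a - b ∈ intLattice d := by
  rw [torusMk, QuotientAddGroup.mk'_apply, QuotientAddGroup.mk'_apply,
    QuotientAddGroup.eq_iff_sub_mem]

lemma expansive_det_unit {d : ℕ} {A : Matrix (Fin d) (Fin d) ℤ} (hA : Expansive A) :
    IsUnit ((toR A)ᵀ).det := by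
  rw [Matrix.det_transpose, isUnit_iff_ne_zero]
  have h1 : (A.map (Int.cast : ℤ → ℂ)).det ≠ 0 := by
    intro h
    set M := A.map (Int.cast : ℤ → ℂ) with hM
    have h2 := Matrix.det_eq_sign_charpoly_coeff M
    rw [h] at h2
    have h3 : M.charpoly.coeff 0 = 0 := by
      rcases mul_eq_zero.mp h2.symm with h4 | h4
      · exact absurd h4 (pow_ne_zero _ (by norm_num))
      · exact h4
    have hroot : M.charpoly.IsRoot 0 := by
      rwa [Polynomial.IsRoot, ← Polynomial.coeff_zero_eq_eval_zero]
    have := hA 0 hroot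
    rw [norm_zero] at this
    exact absurd this (by norm_num)
  have hcast : ((A.det : ℤ) : ℂ) = (A.map (Int.cast : ℤ → ℂ)).det := by
    have := RingHom.map_det (Int.castRingHom ℂ) A
    rwa [RingHom.mapMatrix_apply, Int.coe_castRingHom] at this
  have h2 : (A.det : ℂ) ≠ 0 := by rw [hcast]; exact h1
  have h3 : A.det ≠ 0 := by exact_mod_cast h2
  have h4 : (toR A).det = (A.det : ℝ) := by
    have := RingHom.map_det (Int.castRingHom ℝ) A
    rw [RingHom.mapMatrix_apply, Int.coe_castRingHom] at this
    exact this.symm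
  rw [h4]
  exact_mod_cast h3

lemma inv_mulVec_eq {d : ℕ} {A : Matrix (Fin d) (Fin d) ℤ} (hA : Expansive A)
    {z w : Fin d → ℝ} (h : z = ((toR A)ᵀ).mulVec w) :
    (((toR A)ᵀ)⁻¹).mulVec z = w := by
  rw [h, Matrix.mulVec_mulVec, Matrix.nonsing_inv_mul _ (expansive_det_unit hA),
    Matrix.one_mulVec]

lemma inv_lattice_iff {d : ℕ} {A : Matrix (Fin d) (Fin d) ℤ} (hA : Expansive A)
    (m : Fin d → ℤ) :
    (((toR A)ᵀ)⁻¹).mulVec (cV m) ∈ intLattice d ↔ ∃ y, m = Aᵀ.mulVec y := by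
  constructor
  · intro h
    obtain ⟨y, hy⟩ := (by
      choose f hf using h
      exact ⟨f, funext hf⟩ : ∃ y : Fin d → ℤ, (((toR A)ᵀ)⁻¹).mulVec (cV m) = cV y)
    refine ⟨y, cV_inj ?_⟩
    have hmul : ((toR A)ᵀ).mulVec ((((toR A)ᵀ)⁻¹).mulVec (cV m)) = cV m := by
      rw [Matrix.mulVec_mulVec, Matrix.mul_nonsing_inv _ (expansive_det_unit hA),
        Matrix.one_mulVec]
    rw [hy] at hmul
    rw [← hmul, ← toR_transpose, mulVec_cV]
  · rintro ⟨y, rfl⟩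
    have : (((toR A)ᵀ)⁻¹).mulVec (cV (Aᵀ.mulVec y)) = cV y :=
      inv_mulVec_eq hA (by rw [← toR_transpose, mulVec_cV])
    rw [this]
    exact cV_mem y

lemma tauD_diff {d : ℕ} (A : Matrix (Fin d) (Fin d) ℤ) (v w : Fin d → ℤ)
    (x y : Fin d → ℝ) :
    tauD A w y - tauD A v x = (((toR A)ᵀ)⁻¹).mulVec (y - x + cV (w - v)) := by
  have h : (y + cV w) - (x + cV v) = y - x + cV (w - v) := by
    rw [cV_sub]; abel
  show (((toR A)ᵀ)⁻¹).mulVec (y + cV w) - (((toR A)ᵀ)⁻¹).mulVec (x + cV v) = _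
  rw [← Matrix.mulVec_sub, h]

/-- One step of the digit-adjustment: for an integer vector `t`, the unique digit
congruent to `t` mod `Aᵀℤ^d`, together with (minus) the quotient. -/
noncomputable def stp {d : ℕ} {A : Matrix (Fin d) (Fin d) ℤ} {D : Set (Fin d → ℤ)}
    (hD : CompleteDigits A D) (t : Fin d → ℤ) : (Fin d → ℤ) × (Fin d → ℤ) :=
  ⟨(hD t).exists.choose, -((hD t).exists.choose_spec.2).choose⟩

lemma stp_mem {d : ℕ} {A : Matrix (Fin d) (Fin d) ℤ} {D : Set (Fin d → ℤ)}
    (hD : CompleteDigits A D) (t : Fin d → ℤ) : (stp hD t).1 ∈ D :=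
  (hD t).exists.choose_spec.1

lemma stp_spec {d : ℕ} {A : Matrix (Fin d) (Fin d) ℤ} {D : Set (Fin d → ℤ)}
    (hD : CompleteDigits A D) (t : Fin d → ℤ) :
    t - (stp hD t).1 = -(Aᵀ.mulVec (stp hD t).2) := by
  have h := ((hD t).exists.choose_spec.2).choose_spec
  show t - (hD t).exists.choose = _
  rw [h, stp, Matrix.mulVec_neg, neg_neg]

/-- The sequence of integer offsets in the digit-adjustment recursion. -/
noncomputable def mseq {d : ℕ} {A : Matrix (Fin d) (Fin d) ℤ} {D : Set (Fin d → ℤ)}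
    (hD : CompleteDigits A D) (ω : ℕ → Fin d → ℤ) (k : Fin d → ℤ) : ℕ → Fin d → ℤ
  | 0 => k
  | n + 1 => (stp hD (ω n - mseq hD ω k n)).2

/-- The adjusted digit string. -/
noncomputable def ωseq {d : ℕ} {A : Matrix (Fin d) (Fin d) ℤ} {D : Set (Fin d → ℤ)}
    (hD : CompleteDigits A D) (ω : ℕ → Fin d → ℤ) (k : Fin d → ℤ) (n : ℕ) :
    Fin d → ℤ :=
  (stp hD (ω n - mseq hD ω k n)).1

lemma mseq_rel {d : ℕ} {A : Matrix (Fin d) (Fin d) ℤ} {D : Set (Fin d → ℤ)}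
    (hD : CompleteDigits A D) (ω : ℕ → Fin d → ℤ) (k : Fin d → ℤ) (n : ℕ) :
    mseq hD ω k n + ωseq hD ω k n - ω n = Aᵀ.mulVec (mseq hD ω k (n + 1)) := by
  have h := stp_spec hD (ω n - mseq hD ω k n)
  show mseq hD ω k n + ωseq hD ω k n - ω n = Aᵀ.mulVec (stp hD (ω n - mseq hD ω k n)).2
  have : ω n - mseq hD ω k n - (stp hD (ω n - mseq hD ω k n)).1
      = -(Aᵀ.mulVec (stp hD (ω n - mseq hD ω k n)).2) := h
  rw [ωseq]
  linear_combination (norm := abel) -this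

lemma tauWord_invariant {d : ℕ} {A : Matrix (Fin d) (Fin d) ℤ} {D : Set (Fin d → ℤ)}
    (hA : Expansive A) (hD : CompleteDigits A D) (ω : ℕ → Fin d → ℤ)
    (k : Fin d → ℤ) (x : Fin d → ℝ) (n : ℕ) :
    tauWord A (ωseq hD ω k) n (x + cV k) = tauWord A ω n x + cV (mseq hD ω k n) := by
  induction n with
  | zero => rfl
  | succ n ih =>
    show tauD A (ωseq hD ω k n) (tauWord A (ωseq hD ω k) n (x + cV k))
        = tauD A (ω n) (tauWord A ω n x) + cV (mseq hD ω k (n + 1))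
    rw [ih]
    have hdiff := tauD_diff A (ω n) (ωseq hD ω k n)
      (tauWord A ω n x) (tauWord A ω n x + cV (mseq hD ω k n))
    have harg : tauWord A ω n x + cV (mseq hD ω k n) - tauWord A ω n x
        + cV (ωseq hD ω k n - ω n) = cV (mseq hD ω k n + ωseq hD ω k n - ω n) := by
      simp only [cV_sub, cV_add]
      abel
    rw [harg, mseq_rel hD ω k n] at hdiff
    have hlast : (((toR A)ᵀ)⁻¹).mulVec (cV (Aᵀ.mulVec (mseq hD ω k (n + 1))))
        = cV (mseq hD ω k (n + 1)) :=
      inv_mulVec_eq hA (by rw [← toR_transpose, mulVec_cV])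
    rw [hlast] at hdiff
    exact sub_eq_iff_eq_add'.mp hdiff

lemma tauWord_congr {d : ℕ} (A : Matrix (Fin d) (Fin d) ℤ)
    (ω ω' : ℕ → Fin d → ℤ) (x : Fin d → ℝ) (n : ℕ) (h : ∀ j < n, ω j = ω' j) :
    tauWord A ω n x = tauWord A ω' n x := by
  induction n with
  | zero => rfl
  | succ n ih =>
    show tauD A (ω n) (tauWord A ω n x) = tauD A (ω' n) (tauWord A ω' n x)
    rw [ih (fun j hj => h j (Nat.lt_succ_of_lt hj)), h n (Nat.lt_succ_self n)]

/-- for every x, k and digit string ω there is a unique digit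
string ω' with 𝔡(x, ω) = 𝔡(x + k, ω'); and if 𝔡(x,ω) = 𝔡(x',ω') then
x' − x ∈ ℤ^d. -/
theorem statement9 (d : ℕ) (hd : 0 < d) (A : Matrix (Fin d) (Fin d) ℤ)
    (hA : Expansive A) (D : Set (Fin d → ℤ)) (hD : CompleteDigits A D) :
    (∀ (x : Fin d → ℝ) (k : Fin d → ℤ) (ω : ℕ → Fin d → ℤ), (∀ n, ω n ∈ D) →
      ∃! ω' : ℕ → Fin d → ℤ, (∀ n, ω' n ∈ D) ∧
        codeMap A x ω = codeMap A (x + fun i => (k i : ℝ)) ω') ∧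
    ∀ (x x' : Fin d → ℝ) (ω ω' : ℕ → Fin d → ℤ),
      (∀ n, ω n ∈ D) → (∀ n, ω' n ∈ D) →
      codeMap A x ω = codeMap A x' ω' → (x' - x) ∈ intLattice d := by
  constructor
  · intro x k ω hω
    have hcode : codeMap A x ω = codeMap A (x + cV k) (ωseq hD ω k) := by
      funext n
      show torusMk d (tauWord A ω n x)
          = torusMk d (tauWord A (ωseq hD ω k) n (x + cV k))
      rw [tauWord_invariant hA hD ω k x n, torusMk_eq_iff, sub_add_cancel_left]
      exact (intLattice d).neg_mem (cV_mem _)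
    refine ⟨ωseq hD ω k, ⟨fun n => stp_mem hD _, hcode⟩, ?_⟩
    rintro ω'' ⟨hmem, heq⟩
    have heq2 : codeMap A (x + cV k) ω'' = codeMap A (x + cV k) (ωseq hD ω k) := by
      have heq' : codeMap A x ω = codeMap A (x + cV k) ω'' := heq
      rw [← heq', hcode]
    funext n
    induction n using Nat.strong_induction_on with
    | _ n ih =>
      have hw : tauWord A ω'' n (x + cV k) = tauWord A (ωseq hD ω k) n (x + cV k) :=
        tauWord_congr A ω'' (ωseq hD ω k) _ n (fun j hj => ih j hj)
      have h1 : torusMk d (tauD A (ω'' n) (tauWord A ω'' n (x + cV k)))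
          = torusMk d (tauD A (ωseq hD ω k n)
              (tauWord A (ωseq hD ω k) n (x + cV k))) :=
        congrFun heq2 (n + 1)
      rw [hw, torusMk_eq_iff] at h1
      have h3 : tauD A (ω'' n) (tauWord A (ωseq hD ω k) n (x + cV k))
          - tauD A (ωseq hD ω k n) (tauWord A (ωseq hD ω k) n (x + cV k))
          = (((toR A)ᵀ)⁻¹).mulVec (cV (ω'' n - ωseq hD ω k n)) := by
        rw [tauD_diff]
        congr 1
        simp
      rw [h3] at h1
      obtain ⟨y, hy⟩ := (inv_lattice_iff hA _).mp h1
      exact (hD (ω'' n)).unique ⟨hmem n, 0, by simp⟩ ⟨stp_mem hD _, y, hy⟩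
  · intro x x' ω ω' _ _ h
    have h0 : torusMk d x = torusMk d x' := congrFun h 0
    have h1 := (torusMk_eq_iff x x').mp h0
    have h2 := (intLattice d).neg_mem h1
    rwa [neg_sub] at h2
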